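/- arXiv:2101.02622 — 2 statements merged into one kernel-verified Lean document; each statement's English description precedes it below -/
import Mathlib

section
/- Let E, F be matrix ordered operator spaces and φ : E → F completely contractive and completely positive. Then the unitization φ♯ : E♯ → F♯ defined by φ♯(x,α) = (φ(x),α) is unital and completely positive. Moreover, if φ is a completely isometric complete order isomorphism then φ♯ is a unital complete order isomorphism. -/
open scoped ComplexOrder

abbrev Mat (n : ℕ) := Matrix (Fin n) (Fin n) ℂ
abbrev MatE (E : Type*) (n : ℕ) := Matrix (Fin n) (Fin n) E

noncomputable def opNorm {m : Type*} [Fintype m] [DecidableEq m] (A : Matrix m m ℂ) : ℝ :=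
  ‖Matrix.toEuclideanCLM (𝕜 := ℂ) A‖

section MOOS
variable (E : Type*) [AddCommGroup E] [Module ℂ E] [StarAddMonoid E] [StarModule ℂ E]

/-- Scalar conjugation `A x A*` of a matrix over `E` by a scalar matrix `A`. -/
def scalarConj {m n : ℕ} (A : Matrix (Fin m) (Fin n) ℂ) (x : MatE E n) : MatE E m :=
  fun i j => ∑ k, ∑ l, (A i k * star (A j l)) • x k l

/-- A matrix ordered operator space structure on `E`: matrix norms and matrix cones. -/
structure MOOS where
  matNorm : ∀ n : ℕ, MatE E n → ℝ
  pos : ∀ n : ℕ, Set (MatE E n)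
  pos_selfadj : ∀ n : ℕ, ∀ x ∈ pos n, ∀ i j, star (x i j) = x j i
  pos_cap_neg : ∀ n : ℕ, ∀ x ∈ pos n, -x ∈ pos n → x = 0
  pos_conj : ∀ m n : ℕ, ∀ A : Matrix (Fin m) (Fin n) ℂ, ∀ x ∈ pos n,
      scalarConj E A x ∈ pos m

variable {E}

/-- The amplification `φₖ : Mₖ(E) → Mₖ(M_d)` of a linear map `φ : E → M_d`. -/
def amp {d : ℕ} (φ : E →ₗ[ℂ] Mat d) (k : ℕ) (x : MatE E k) :
    Matrix (Fin k × Fin d) (Fin k × Fin d) ℂ :=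
  fun p q => φ (x p.1 q.1) p.2 q.2

/-- `φ : E → M_d` is completely contractive and completely positive. -/
noncomputable def IsCCP (M : MOOS E) {d : ℕ} (φ : E →ₗ[ℂ] Mat d) : Prop :=
  (∀ k : ℕ, ∀ x ∈ M.pos k, (amp φ k x).PosSemidef) ∧
  (∀ (k : ℕ) (x : MatE E k), opNorm (amp φ k x) ≤ M.matNorm k x)

/-- The matrix cones of the partial unitization `E♯ = E ⊕ ℂ`:
`(x, α)` is positive iff `α ≥ 0` and `φ(α_ε^{-1/2} x α_ε^{-1/2}) ≥ -1` for every
`ε > 0` and every completely contractive completely positive `φ : E → Mₙ`. -/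
noncomputable def sharpPos (M : MOOS E) (n : ℕ) : Set (MatE E n × Mat n) :=
  { p | p.2.PosSemidef ∧
    ∀ ε : ℝ, 0 < ε → ∀ β : Mat n, β.PosSemidef → β * β = p.2 + (ε : ℂ) • 1 →
      ∀ φ : E →ₗ[ℂ] Mat n, IsCCP M φ →
        ((amp φ n (scalarConj E β⁻¹ p.1)) + 1).PosSemidef }

end MOOS

/-- A completely contractive completely positive map between matrix ordered operator spaces. -/
def IsCCPmap {E F : Type*} [AddCommGroup E] [Module ℂ E] [StarAddMonoid E] [StarModule ℂ E]
    [AddCommGroup F] [Module ℂ F] [StarAddMonoid F] [StarModule ℂ F]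
    (M : MOOS E) (N : MOOS F) (φ : E →ₗ[ℂ] F) : Prop :=
  (∀ (n : ℕ) (x : MatE E n), x ∈ M.pos n → x.map φ ∈ N.pos n) ∧
  (∀ (n : ℕ) (x : MatE E n), N.matNorm n (x.map φ) ≤ M.matNorm n x)

section Aux
variable {E F : Type*} [AddCommGroup E] [Module ℂ E] [StarAddMonoid E] [StarModule ℂ E]
    [AddCommGroup F] [Module ℂ F] [StarAddMonoid F] [StarModule ℂ F]

lemma scalarConj_map (φ : E →ₗ[ℂ] F) {m n : ℕ} (A : Matrix (Fin m) (Fin n) ℂ)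
    (x : MatE E n) : (scalarConj E A x).map φ = scalarConj F A (x.map φ) := by
  funext i j
  simp [scalarConj, Matrix.map_apply, map_sum, map_smul]

lemma amp_comp {d : ℕ} (ψ : F →ₗ[ℂ] Mat d) (φ : E →ₗ[ℂ] F) (k : ℕ) (x : MatE E k) :
    amp (ψ.comp φ) k x = amp ψ k (x.map φ) := rfl

lemma IsCCP_comp {M : MOOS E} {N : MOOS F} {φ : E →ₗ[ℂ] F} (hφ : IsCCPmap M N φ)
    {d : ℕ} {ψ : F →ₗ[ℂ] Mat d} (hψ : IsCCP N ψ) : IsCCP M (ψ.comp φ) := by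
  constructor
  · intro k x hx
    rw [amp_comp]
    exact hψ.1 k (x.map φ) (hφ.1 k x hx)
  · intro k x
    rw [amp_comp]
    exact le_trans (hψ.2 k (x.map φ)) (hφ.2 k x)

lemma sharpPos_map {M : MOOS E} {N : MOOS F} {φ : E →ₗ[ℂ] F} (hφ : IsCCPmap M N φ)
    (n : ℕ) (x : MatE E n) (α : Mat n) (h : (x, α) ∈ sharpPos M n) :
    (x.map φ, α) ∈ sharpPos N n := by
  refine ⟨h.1, fun ε hε β hβ hββ ψ hψ => ?_⟩
  have := h.2 ε hε β hβ hββ (ψ.comp φ) (IsCCP_comp hφ hψ)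
  rwa [amp_comp, scalarConj_map] at this

lemma IsCCPmap_symm {M : MOOS E} {N : MOOS F} (e : E ≃ₗ[ℂ] F)
    (hnorm : ∀ (n : ℕ) (x : MatE E n), N.matNorm n (x.map e) = M.matNorm n x)
    (hpos : ∀ (n : ℕ) (x : MatE E n), x ∈ M.pos n ↔ x.map e ∈ N.pos n) :
    IsCCPmap N M (e.symm : F →ₗ[ℂ] E) := by
  have key : ∀ (n : ℕ) (y : MatE F n), (y.map e.symm).map e = y := by
    intro n y
    rw [Matrix.map_map]
    convert Matrix.map_id y
    funext z; exact e.apply_symm_apply z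
  constructor
  · intro n y hy
    simp only [LinearEquiv.coe_coe]
    rw [hpos n (y.map e.symm), key]
    exact hy
  · intro n y
    simp only [LinearEquiv.coe_coe]
    have := hnorm n (y.map e.symm)
    rw [key] at this
    exact this.symm.le

end Aux

theorem stmt_6 {E F : Type*} [AddCommGroup E] [Module ℂ E] [StarAddMonoid E] [StarModule ℂ E]
    [AddCommGroup F] [Module ℂ F] [StarAddMonoid F] [StarModule ℂ F]
    (M : MOOS E) (N : MOOS F) (φ : E →ₗ[ℂ] F) (hφ : IsCCPmap M N φ) :
    -- φ♯ is unital
    ((LinearMap.prodMap φ (LinearMap.id : ℂ →ₗ[ℂ] ℂ)) ((0 : E), (1 : ℂ)) = ((0 : F), (1 : ℂ))) ∧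
    -- φ♯ is completely positive
    (∀ (n : ℕ) (x : MatE E n) (α : Mat n),
        (x, α) ∈ sharpPos M n → (x.map φ, α) ∈ sharpPos N n) ∧
    -- if φ is a completely isometric complete order isomorphism, then φ♯ is a
    -- unital complete order isomorphism
    (∀ e : E ≃ₗ[ℂ] F,
      (e : E →ₗ[ℂ] F) = φ →
      (∀ (n : ℕ) (x : MatE E n), N.matNorm n (x.map e) = M.matNorm n x) →
      (∀ (n : ℕ) (x : MatE E n), x ∈ M.pos n ↔ x.map e ∈ N.pos n) →
      ∀ (n : ℕ) (x : MatE E n) (α : Mat n),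
        (x, α) ∈ sharpPos M n ↔ (x.map e, α) ∈ sharpPos N n) := by
  refine ⟨by simp, fun n x α h => sharpPos_map hφ n x α h, fun e he hnorm hpos n x α => ?_⟩
  constructor
  · intro h
    have : IsCCPmap M N (e : E →ₗ[ℂ] F) := by
      constructor
      · intro k y hy; exact (hpos k y).mp hy
      · intro k y; exact (hnorm k y).le
    exact sharpPos_map this n x α h
  · intro h
    have h2 := sharpPos_map (IsCCPmap_symm e hnorm hpos) n (x.map e) α h
    simp only [LinearEquiv.coe_coe] at h2
    have : (x.map ⇑e).map ⇑e.symm = x := by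
      rw [Matrix.map_map]
      convert Matrix.map_id x
      funext z; exact e.symm_apply_apply z
    rwa [this] at h2
end

section
/- Let K be a compact nc convex set and X ⊆ K a subset. Define X⊥ = {a ∈ A(K) : a(x) = 0 for all x ∈ X} and for Q ⊆ A(K), Q⊥ = {x ∈ K : a(x) = 0 for all a ∈ Q}. Then X⊥⊥ = Y ∩ K where Y is the closed nc convex hull in M(A(K)*) of the union of the linear spans of the X_n. -/
open Matrix

/-- nc points at level `n` over the space `V` (thought of as `A(K)`):
elements of `Mₙ(V*)`, i.e. linear maps `V → Mₙ`. -/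
abbrev NCPt (V : Type*) [AddCommGroup V] [Module ℂ V] (n : ℕ) :=
  V →ₗ[ℂ] Matrix (Fin n) (Fin n) ℂ

section
variable {V : Type*} [AddCommGroup V] [Module ℂ V]

/-- Compression `α* x α` of an nc point by a scalar matrix `α`. -/
noncomputable def conjPt {p n : ℕ} (A : Matrix (Fin p) (Fin n) ℂ) (x : NCPt V p) : NCPt V n where
  toFun v := Aᴴ * x v * A
  map_add' u v := by simp [map_add, Matrix.mul_add, Matrix.add_mul]
  map_smul' c v := by simp [_root_.map_smul, Matrix.mul_smul, Matrix.smul_mul]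

/-- A (finite) nc convex combination `Σ αᵢ* xᵢ αᵢ`. -/
noncomputable def ncCombo {n k : ℕ} (ns : Fin k → ℕ) (xs : ∀ i, NCPt V (ns i))
    (αs : ∀ i, Matrix (Fin (ns i)) (Fin n) ℂ) : NCPt V n :=
  ∑ i, conjPt (αs i) (xs i)

/-- The topology of point-weak* (pointwise) convergence on nc points. -/
noncomputable def lmTop (V : Type*) [AddCommGroup V] [Module ℂ V] (n : ℕ) :
    TopologicalSpace (NCPt V n) :=
  TopologicalSpace.induced (fun f => (f : V → Matrix (Fin n) (Fin n) ℂ)) Pi.topologicalSpace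

/-- A graded family is closed under nc convex combinations. -/
def ClosedUnderNCCombos (Y : ∀ n : ℕ, Set (NCPt V n)) : Prop :=
  ∀ (n k : ℕ) (ns : Fin k → ℕ) (xs : ∀ i, NCPt V (ns i))
    (αs : ∀ i, Matrix (Fin (ns i)) (Fin n) ℂ),
    (∀ i, xs i ∈ Y (ns i)) → (∑ i, (αs i)ᴴ * αs i) = 1 → ncCombo ns xs αs ∈ Y n

/-- A compact nc convex set over `V`. -/
def IsCompactNCConvex (K : ∀ n : ℕ, Set (NCPt V n)) : Prop :=
  (∀ n, @IsCompact _ (lmTop V n) (K n)) ∧ ClosedUnderNCCombos K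

/-- The closed nc convex hull of a graded family. -/
def ncClosedConvexHull (X : ∀ n : ℕ, Set (NCPt V n)) : ∀ n : ℕ, Set (NCPt V n) :=
  fun n =>
    { x | ∀ Y : ∀ m : ℕ, Set (NCPt V m),
        (∀ m, X m ⊆ Y m) → (∀ m, @IsClosed _ (lmTop V m) (Y m)) →
        ClosedUnderNCCombos Y → x ∈ Y n }

end

/-! ### Auxiliary lemmas -/

section Aux
variable {V : Type*} [AddCommGroup V] [Module ℂ V]

lemma conjPt_apply {p n : ℕ} (A : Matrix (Fin p) (Fin n) ℂ) (x : NCPt V p) (a : V) :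
    conjPt A x a = Aᴴ * x a * A := rfl

/-- The annihilator-of-annihilator submodule `W`. -/
noncomputable def Wsub (X : ∀ n : ℕ, Set (NCPt V n)) (m : ℕ) : Submodule ℂ (NCPt V m) where
  carrier := {z | ∀ a : V, (∀ p : ℕ, ∀ y ∈ X p, y a = 0) → z a = 0}
  add_mem' := by intro z w hz hw a ha; simp [hz a ha, hw a ha]
  zero_mem' := by intro a _; simp
  smul_mem' := by intro c z hz a ha; simp [hz a ha]

lemma Wclosed (X : ∀ n : ℕ, Set (NCPt V n)) (m : ℕ) :
    @IsClosed _ (lmTop V m) ((Wsub X m : Set (NCPt V m))) := by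
  letI := lmTop V m
  have he : (Wsub X m : Set (NCPt V m)) =
      ⋂ (a : V) (_ : ∀ p : ℕ, ∀ y ∈ X p, y a = 0),
        (fun z : NCPt V m => (z : V → Matrix (Fin m) (Fin m) ℂ) a) ⁻¹' {0} := by
    ext z
    simp only [SetLike.mem_coe, Set.mem_iInter, Set.mem_preimage, Set.mem_singleton_iff]
    rfl
  rw [he]
  refine isClosed_iInter fun a => isClosed_iInter fun _ => ?_
  exact isClosed_singleton.preimage ((continuous_apply a).comp continuous_induced_dom)

lemma Wcombos (X : ∀ n : ℕ, Set (NCPt V n)) :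
    ClosedUnderNCCombos (V := V) (fun m => (Wsub X m : Set (NCPt V m))) := by
  intro n k ns xs αs hxs _ a ha
  have : ncCombo ns xs αs a = ∑ i, (αs i)ᴴ * (xs i a) * (αs i) := by
    simp [ncCombo, conjPt_apply]
  rw [this]
  refine Finset.sum_eq_zero fun i _ => ?_
  rw [hxs i a ha, Matrix.mul_zero, Matrix.zero_mul]

/-- Generating set for the "span part" of the hull. -/
def Gset (X : ∀ n : ℕ, Set (NCPt V n)) (n : ℕ) : Set (NCPt V n) :=
  {z | ∃ (m : ℕ) (y : NCPt V m) (β : Matrix (Fin m) (Fin n) ℂ), y ∈ X m ∧ z = conjPt β y}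

noncomputable def Tsub (X : ∀ n : ℕ, Set (NCPt V n)) (n : ℕ) : Submodule ℂ (NCPt V n) :=
  Submodule.span ℂ (Gset X n)

end Aux

open ComplexOrder in
/-- key matrix fact : for PSD `M` there is `c > 0` and `B` with `Bᴴ B = 1 - c • M`. -/
lemma exists_complement {n : ℕ} (M : Matrix (Fin n) (Fin n) ℂ) (hM : M.PosSemidef) :
    ∃ (c : ℝ) (B : Matrix (Fin n) (Fin n) ℂ), 0 < c ∧ Bᴴ * B = 1 - (c : ℂ) • M := by
  classical
  have hherm := hM.1
  set lam := hherm.eigenvalues with hlam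
  have hnn : ∀ i, 0 ≤ lam i := hM.eigenvalues_nonneg
  set r : ℝ := ∑ i, lam i with hr
  have hr0 : 0 ≤ r := Finset.sum_nonneg fun i _ => hnn i
  set c : ℝ := 1 / (r + 1) with hcdef
  have hc : 0 < c := by positivity
  have hle : ∀ i, c * lam i ≤ 1 := by
    intro i
    have h1 : lam i ≤ r + 1 := by
      have := Finset.single_le_sum (f := lam) (fun j _ => hnn j) (Finset.mem_univ i)
      linarith
    have := mul_le_mul_of_nonneg_left h1 hc.le
    calc c * lam i ≤ c * (r + 1) := this
      _ = 1 := by rw [hcdef]; field_simp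
  set U : Matrix (Fin n) (Fin n) ℂ := (hherm.eigenvectorUnitary : Matrix (Fin n) (Fin n) ℂ)
    with hU
  have hUU : U * star U = 1 := Matrix.mem_unitaryGroup_iff.mp (hherm.eigenvectorUnitary).2
  have hdiag : Matrix.diagonal (fun i => ((1 - c * lam i : ℝ) : ℂ)) =
      1 - (c : ℂ) • Matrix.diagonal (RCLike.ofReal ∘ lam) := by
    ext i j
    rcases eq_or_ne i j with h | h
    · subst h
      simp only [Matrix.diagonal_apply_eq, Matrix.sub_apply, Matrix.one_apply_eq,
        Matrix.smul_apply, Function.comp_apply, smul_eq_mul]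
      push_cast
      try rfl
      try norm_num
      try rw [show (RCLike.ofReal : ℝ → ℂ) = Complex.ofReal from rfl]
      try push_cast
      try ring
    · simp [Matrix.diagonal_apply, Matrix.one_apply, h]
  have key : (1 : Matrix (Fin n) (Fin n) ℂ) - (c : ℂ) • M
      = U * Matrix.diagonal (fun i => ((1 - c * lam i : ℝ) : ℂ)) * star U := by
    rw [hdiag, Matrix.mul_sub, Matrix.mul_one, Matrix.sub_mul, hUU, Matrix.mul_smul,
      Matrix.smul_mul, hU]
    conv_lhs => rw [hherm.spectral_theorem, Unitary.conjStarAlgAut_apply]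
  have hpsd : ((1 : Matrix (Fin n) (Fin n) ℂ) - (c : ℂ) • M).PosSemidef := by
    rw [key, Matrix.star_eq_conjTranspose]
    refine Matrix.PosSemidef.mul_mul_conjTranspose_same ?_ U
    refine Matrix.PosSemidef.diagonal fun i => ?_
    exact Complex.zero_le_real.mpr (by linarith [hle i])
  obtain ⟨B, hB⟩ : ∃ B : Matrix (Fin n) (Fin n) ℂ, (1 - (c : ℂ) • M) = star B * B := by
    open scoped MatrixOrder in exact CStarAlgebra.nonneg_iff_eq_star_mul_self.mp hpsd.nonneg
  exact ⟨c, B, hc, hB.symm⟩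

/-! ### Sesquilinear polarization -/

lemma sesq_zero {M : Type*} [AddCommGroup M] [Module ℂ M] (B : M → M → ℂ)
    (haddl : ∀ u v w, B (u + v) w = B u w + B v w)
    (haddr : ∀ u v w, B u (v + w) = B u v + B u w)
    (hsml : ∀ (c : ℂ) (u v : M), B (c • u) v = star c * B u v)
    (hsmr : ∀ (c : ℂ) (u v : M), B u (c • v) = c * B u v)
    (hdiag : ∀ u, B u u = 0) (u v : M) : B u v = 0 := by
  have h1 := hdiag (u + v)
  have h2 := hdiag (u + Complex.I • v)
  simp only [haddl, haddr, hsml, hsmr, hdiag, Complex.star_def, Complex.conj_I] at h1 h2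
  ring_nf at h1 h2
  linear_combination (1/2 : ℂ) * h1 - (Complex.I/2) * h2 + ((B u v - B v u)/2) * Complex.I_sq

section Aux2
variable {V : Type*} [AddCommGroup V] [Module ℂ V]

/-- The sesquilinear version of `conjPt`. -/
noncomputable def sqPt {m n : ℕ} (y : NCPt V m) (β γ : Matrix (Fin m) (Fin n) ℂ) : NCPt V n where
  toFun a := βᴴ * y a * γ
  map_add' u v := by simp [map_add, Matrix.mul_add, Matrix.add_mul]
  map_smul' c v := by simp [Matrix.mul_smul, Matrix.smul_mul]

lemma sqPt_self {m n : ℕ} (y : NCPt V m) (β : Matrix (Fin m) (Fin n) ℂ) :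
    sqPt y β β = conjPt β y := rfl

lemma sqPt_add_left {m n : ℕ} (y : NCPt V m) (β β' γ : Matrix (Fin m) (Fin n) ℂ) :
    sqPt y (β + β') γ = sqPt y β γ + sqPt y β' γ := by
  refine LinearMap.ext fun a => ?_
  show (β + β')ᴴ * y a * γ = βᴴ * y a * γ + β'ᴴ * y a * γ
  rw [Matrix.conjTranspose_add, Matrix.add_mul, Matrix.add_mul]

lemma sqPt_add_right {m n : ℕ} (y : NCPt V m) (β γ γ' : Matrix (Fin m) (Fin n) ℂ) :
    sqPt y β (γ + γ') = sqPt y β γ + sqPt y β γ' := by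
  refine LinearMap.ext fun a => ?_
  show βᴴ * y a * (γ + γ') = βᴴ * y a * γ + βᴴ * y a * γ'
  rw [Matrix.mul_add]

lemma sqPt_smul_left {m n : ℕ} (y : NCPt V m) (c : ℂ) (β γ : Matrix (Fin m) (Fin n) ℂ) :
    sqPt y (c • β) γ = star c • sqPt y β γ := by
  refine LinearMap.ext fun a => ?_
  show (c • β)ᴴ * y a * γ = star c • (βᴴ * y a * γ)
  rw [Matrix.conjTranspose_smul, Matrix.smul_mul, Matrix.smul_mul]

lemma sqPt_smul_right {m n : ℕ} (y : NCPt V m) (c : ℂ) (β γ : Matrix (Fin m) (Fin n) ℂ) :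
    sqPt y β (c • γ) = c • sqPt y β γ := by
  refine LinearMap.ext fun a => ?_
  show βᴴ * y a * (c • γ) = c • (βᴴ * y a * γ)
  rw [Matrix.mul_smul]

end Aux2

lemma conjTranspose_stdBasisMatrix' {m n : ℕ} (s : Fin m) (i : Fin n) :
    (Matrix.single s i (1:ℂ))ᴴ = Matrix.single i s 1 := by
  ext p q
  simp only [Matrix.conjTranspose_apply, Matrix.single, Matrix.of_apply]
  split_ifs with h1 h2 h2 <;> simp_all [and_comm]

lemma stdBasis_conj_aux {m n : ℕ} (M : Matrix (Fin m) (Fin m) ℂ) (k l : Fin m) (i j : Fin n) :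
    Matrix.single i k (1:ℂ) * M * Matrix.single l j (1:ℂ) = M k l • Matrix.single i j (1:ℂ) := by
  ext p q
  simp [Matrix.mul_apply, Matrix.single, Matrix.of_apply, ite_and, mul_ite, ite_mul,
    zero_mul, mul_zero, mul_one, one_mul, Finset.sum_ite_eq, Finset.sum_ite_eq',
    Matrix.smul_apply, smul_eq_mul]
  split_ifs <;> simp

section Interp
variable {V : Type*} [AddCommGroup V] [Module ℂ V]

lemma interp (X : ∀ n : ℕ, Set (NCPt V n)) {n : ℕ} (z : NCPt V n)
    (hz : z ∈ Wsub X n) (F : Finset V) :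
    ∃ w : NCPt V n, w ∈ Tsub X n ∧ ∀ a ∈ F, w a = z a := by
  classical
  let Φ : NCPt V n →ₗ[ℂ] (↥F → Matrix (Fin n) (Fin n) ℂ) :=
    { toFun := fun w a => w (a : V)
      map_add' := fun w₁ w₂ => by funext a; simp
      map_smul' := fun c w => by funext a; simp }
  set U : Submodule ℂ (↥F → Matrix (Fin n) (Fin n) ℂ) := (Tsub X n).map Φ with hUdef
  by_cases hmem : Φ z ∈ U
  · obtain ⟨w, hw, hwz⟩ := hmem
    exact ⟨w, hw, fun a ha => congrFun hwz ⟨a, ha⟩⟩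
  · exfalso
    obtain ⟨g, hgz, hgU⟩ := U.exists_dual_map_eq_bot_of_notMem hmem inferInstance
    have hg0 : ∀ w ∈ Tsub X n, g (Φ w) = 0 := by
      intro w hw
      have : g (Φ w) ∈ U.map g := ⟨Φ w, ⟨w, hw, rfl⟩, rfl⟩
      rw [hgU] at this
      simpa using this
    obtain ⟨co, hco⟩ : ∃ co : ↥F → Fin n → Fin n → ℂ,
        co = fun a i j => g (Pi.single a (Matrix.single i j (1:ℂ))) := ⟨_, rfl⟩
    -- expansion of `g` in coordinates
    have hgexp : ∀ t : ↥F → Matrix (Fin n) (Fin n) ℂ,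
        g t = ∑ a : ↥F, ∑ i : Fin n, ∑ j : Fin n, t a i j * co a i j := by
      intro t
      conv_lhs => rw [← Finset.univ_sum_single t, map_sum]
      refine Finset.sum_congr rfl fun a _ => ?_
      have h1 : Pi.single (M := fun _ : ↥F => Matrix (Fin n) (Fin n) ℂ) a (t a)
          = ∑ i : Fin n, ∑ j : Fin n,
              t a i j • Pi.single (M := fun _ : ↥F => Matrix (Fin n) (Fin n) ℂ) a
                (Matrix.single i j (1:ℂ)) := by
        funext b
        rcases eq_or_ne b a with rfl | hba
        · simp only [Pi.single_eq_same, Finset.sum_apply, Pi.smul_apply]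
          calc t b = ∑ i : Fin n, ∑ j : Fin n, Matrix.single i j (t b i j) :=
                matrix_eq_sum_single _
            _ = _ := by
                refine Finset.sum_congr rfl fun i _ => Finset.sum_congr rfl fun j _ => ?_
                rw [smul_single, smul_eq_mul, mul_one]
        · simp [Pi.single_eq_of_ne hba]
      rw [h1]
      simp only [map_sum, _root_.map_smul, smul_eq_mul, hco]
    -- vanishing of `g` on the generators, sesquilinearized
    have hgen : ∀ (p : ℕ) (y : NCPt V p), y ∈ X p → ∀ (β γ : Matrix (Fin p) (Fin n) ℂ),
        g (fun a => (sqPt y β γ) (a : V)) = 0 := by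
      intro p y hy
      refine sesq_zero (fun β γ => g (fun a => (sqPt y β γ) (a : V))) ?_ ?_ ?_ ?_ ?_
      · intro u v w
        rw [sqPt_add_left]
        rw [show (fun a : ↥F => (sqPt y u w + sqPt y v w) (a : V))
          = (fun a : ↥F => (sqPt y u w) (a : V)) + (fun a : ↥F => (sqPt y v w) (a : V)) from rfl]
        exact map_add g _ _
      · intro u v w
        rw [sqPt_add_right]
        rw [show (fun a : ↥F => (sqPt y u v + sqPt y u w) (a : V))
          = (fun a : ↥F => (sqPt y u v) (a : V)) + (fun a : ↥F => (sqPt y u w) (a : V)) from rfl]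
        exact map_add g _ _
      · intro c u v
        rw [sqPt_smul_left]
        rw [show (fun a : ↥F => (star c • sqPt y u v) (a : V))
          = star c • (fun a : ↥F => (sqPt y u v) (a : V)) from rfl]
        rw [_root_.map_smul, smul_eq_mul]
      · intro c u v
        rw [sqPt_smul_right]
        rw [show (fun a : ↥F => (c • sqPt y u v) (a : V))
          = c • (fun a : ↥F => (sqPt y u v) (a : V)) from rfl]
        rw [_root_.map_smul, smul_eq_mul]
      · intro β
        rw [sqPt_self]
        exact hg0 _ (Submodule.subset_span ⟨p, y, β, hy, rfl⟩)
    -- the annihilator vectors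
    have hvQ : ∀ i j : Fin n,
        (∀ p : ℕ, ∀ y ∈ X p, y (∑ a : ↥F, co a i j • (a : V)) = 0) := by
      intro i j p y hy
      ext s t
      have hβγ := hgen p y hy (Matrix.single s i (1:ℂ)) (Matrix.single t j (1:ℂ))
      have hcc : (fun a : ↥F =>
            (sqPt y (Matrix.single s i (1:ℂ)) (Matrix.single t j (1:ℂ))) (a : V))
          = fun a : ↥F => y (a : V) s t • Matrix.single i j (1:ℂ) := by
        funext a
        show (Matrix.single s i (1:ℂ))ᴴ * y (a : V) * Matrix.single t j (1:ℂ) = _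
        rw [conjTranspose_stdBasisMatrix', stdBasis_conj_aux]
      rw [hcc, hgexp] at hβγ
      have hent : ∀ a : ↥F,
          (∑ i' : Fin n, ∑ j' : Fin n,
            (y (a : V) s t • Matrix.single i j (1:ℂ)) i' j' * co a i' j')
          = y (a : V) s t * co a i j := by
        intro a
        rw [Finset.sum_eq_single i]
        · rw [Finset.sum_eq_single j]
          · simp
          · intro b _ hb
            simp [Matrix.smul_apply, hb.symm]
          · simp
        · intro b _ hb
          refine Finset.sum_eq_zero fun b' _ => ?_
          simp [Matrix.smul_apply, hb.symm]
        · simp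
      rw [Finset.sum_congr rfl (fun a _ => hent a)] at hβγ
      rw [map_sum]
      simp only [_root_.map_smul, Matrix.sum_apply, Matrix.smul_apply, smul_eq_mul,
        Matrix.zero_apply]
      simpa [mul_comm] using hβγ
    have hzero : g (Φ z) = 0 := by
      rw [hgexp]
      rw [Finset.sum_comm]
      refine Finset.sum_eq_zero fun i _ => ?_
      rw [Finset.sum_comm]
      refine Finset.sum_eq_zero fun j _ => ?_
      have h0 : z (∑ a : ↥F, co a i j • (a : V)) = 0 := hz _ (hvQ i j)
      have h0' := congrFun (congrFun h0 i) j
      rw [map_sum] at h0'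
      simp only [_root_.map_smul, Matrix.sum_apply, Matrix.smul_apply, smul_eq_mul,
        Matrix.zero_apply] at h0'
      show (∑ a : ↥F, z (a : V) i j * co a i j) = 0
      simpa [mul_comm] using h0'
    exact hgz hzero

end Interp

section Final
open ComplexOrder
variable {V : Type*} [AddCommGroup V] [Module ℂ V]

lemma conjPt_zero {p n : ℕ} (A : Matrix (Fin p) (Fin n) ℂ) :
    conjPt A (0 : NCPt V p) = 0 := by
  refine LinearMap.ext fun a => ?_
  show Aᴴ * (0 : NCPt V p) a * A = 0
  simp

lemma conjPt_smul_smul {p n : ℕ} (s : ℂ) (β : Matrix (Fin p) (Fin n) ℂ) (d : ℂ)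
    (y : NCPt V p) :
    conjPt (s • β) (d • y) = (star s * s * d) • conjPt β y := by
  refine LinearMap.ext fun a => ?_
  show (s • β)ᴴ * (d • y) a * (s • β) = (star s * s * d) • (βᴴ * y a * β)
  rw [Matrix.conjTranspose_smul]
  simp only [LinearMap.smul_apply]
  simp only [Matrix.smul_mul, Matrix.mul_smul, smul_smul]
  congr 1
  ring

lemma T_subset (X : ∀ m : ℕ, Set (NCPt V m)) (Y : ∀ m : ℕ, Set (NCPt V m))
    (hXY : ∀ m, (Submodule.span ℂ (X m) : Set (NCPt V m)) ⊆ Y m)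
    (hco : ClosedUnderNCCombos Y) (n : ℕ) :
    (Tsub X n : Set (NCPt V n)) ⊆ Y n := by
  intro x hx
  obtain ⟨k, f, gg, hsum⟩ := Submodule.mem_span_set'.mp hx
  choose ms ys βs hys hconj using fun i => (gg i).2
  have hpsd : (∑ i, (βs i)ᴴ * βs i).PosSemidef := by
    refine Finset.sum_induction _ _ (fun a b ha hb => ha.add hb) Matrix.PosSemidef.zero
      fun i _ => Matrix.posSemidef_conjTranspose_mul_self _
  obtain ⟨c, B, hc, hB⟩ := exists_complement _ hpsd
  set ns' : Fin (k+1) → ℕ := Fin.cases n ms with hns'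
  set xs' : ∀ i, NCPt V (ns' i) :=
    Fin.cases (0 : NCPt V n) (fun i => (((c : ℂ)⁻¹ * f i) • ys i)) with hxs'
  set αs' : ∀ i, Matrix (Fin (ns' i)) (Fin n) ℂ :=
    Fin.cases B (fun i => ((Real.sqrt c : ℂ) • βs i)) with hαs'
  have hmem : ∀ i, xs' i ∈ Submodule.span ℂ (X (ns' i)) := by
    refine Fin.cases ?_ ?_
    · exact Submodule.zero_mem _
    · intro i
      show (((c : ℂ)⁻¹ * f i) • ys i) ∈ _
      exact Submodule.smul_mem (Submodule.span ℂ (X (ms i))) _ (Submodule.subset_span (hys i))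
  have hsum1 : (∑ i, (αs' i)ᴴ * αs' i) = 1 := by
    rw [Fin.sum_univ_succ]
    have h0 : (αs' 0)ᴴ * αs' 0 = Bᴴ * B := rfl
    have hsucc : ∀ i : Fin k, (αs' i.succ)ᴴ * αs' i.succ = (c : ℂ) • ((βs i)ᴴ * βs i) := by
      intro i
      show ((Real.sqrt c : ℂ) • βs i)ᴴ * ((Real.sqrt c : ℂ) • βs i) = _
      rw [Matrix.conjTranspose_smul, Matrix.smul_mul, Matrix.mul_smul, smul_smul]
      congr 1
      rw [Complex.star_def, Complex.conj_ofReal, ← Complex.ofReal_mul,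
        Real.mul_self_sqrt hc.le]
    rw [h0, hB, Finset.sum_congr rfl (fun i _ => hsucc i), ← Finset.smul_sum]
    abel
  have hval : ncCombo ns' xs' αs' = x := by
    rw [ncCombo, Fin.sum_univ_succ]
    have h0 : conjPt (αs' 0) (xs' 0) = 0 := conjPt_zero B
    have hsucc : ∀ i : Fin k, conjPt (αs' i.succ) (xs' i.succ) = f i • (gg i : NCPt V n) := by
      intro i
      show conjPt ((Real.sqrt c : ℂ) • βs i) (((c : ℂ)⁻¹ * f i) • ys i) = _
      rw [conjPt_smul_smul, ← hconj i]
      congr 1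
      rw [Complex.star_def, Complex.conj_ofReal, ← Complex.ofReal_mul,
        Real.mul_self_sqrt hc.le]
      rw [← mul_assoc, mul_inv_cancel₀ (by exact_mod_cast hc.ne'), one_mul]
    rw [h0, Finset.sum_congr rfl (fun i _ => hsucc i), zero_add, hsum]
  have := hco n (k+1) ns' xs' αs' (fun i => hXY _ (hmem i)) hsum1
  rwa [hval] at this

end Final

/-- `X⊥⊥ = Y ∩ K`, where `Y` is the closed nc convex hull of the spans of the `Xₙ`. -/
theorem stmt_9 {V : Type*} [AddCommGroup V] [Module ℂ V]
    (K : ∀ n : ℕ, Set (NCPt V n)) (hK : IsCompactNCConvex K)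
    (X : ∀ n : ℕ, Set (NCPt V n)) (hX : ∀ n, X n ⊆ K n) (n : ℕ) :
    {x ∈ K n | ∀ a : V, (∀ (m : ℕ), ∀ y ∈ X m, y a = 0) → x a = 0}
      = ncClosedConvexHull (fun m => (Submodule.span ℂ (X m) : Set (NCPt V m))) n ∩ K n := by
  classical
  ext x
  simp only [Set.mem_setOf_eq, Set.mem_inter_iff]
  constructor
  · rintro ⟨hxK, hxW⟩
    have hxW' : x ∈ Wsub X n := hxW
    refine ⟨?_, hxK⟩
    intro Y hXY hYcl hYco
    by_contra hxY
    letI := lmTop V n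
    have hopen : IsOpen ((Y n)ᶜ) := (hYcl n).isOpen_compl
    obtain ⟨O, hO, hpre⟩ := isOpen_induced_iff.mp hopen
    have hxO : (x : V → Matrix (Fin n) (Fin n) ℂ) ∈ O := by
      have : x ∈ (Y n)ᶜ := hxY
      rw [← hpre] at this
      exact this
    obtain ⟨I, u, hIu, hsub⟩ := isOpen_pi_iff.mp hO _ hxO
    obtain ⟨w, hwT, hwa⟩ := interp X x hxW' I
    have hwO : (w : V → Matrix (Fin n) (Fin n) ℂ) ∈ O := by
      refine hsub fun a ha => ?_
      rw [hwa a ha]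
      exact (hIu a ha).2
    have hwc : w ∈ (Y n)ᶜ := by
      rw [← hpre]
      exact hwO
    exact hwc (T_subset X Y hXY hYco n hwT)
  · rintro ⟨hhull, hxK⟩
    refine ⟨hxK, ?_⟩
    have hxW : x ∈ Wsub X n := by
      refine hhull (fun m => (Wsub X m : Set (NCPt V m))) ?_ (Wclosed X) (Wcombos X)
      intro m
      refine Submodule.span_le.mpr ?_
      intro y hy a ha
      exact ha m y hy
    exact fun a ha => hxW a ha
end
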